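/- Let (α_{ij}) be a real symmetric 3×3 matrix with det A ≠ 0. Then for every family of real numbers T_{ijkl} (i,j,k,l ∈ {1,2,3}) satisfying T_{ijkl} = −T_{jikl} = −T_{ijlk} = T_{klij}, there exists a unique real symmetric 3×3 matrix (γ_{ij}) such that γ_{ik}α_{jl} + α_{ik}γ_{jl} − γ_{il}α_{jk} − α_{il}γ_{jk} = T_{ijkl} for all i,j,k,l. -/
import Mathlib

open Matrix

set_option maxHeartbeats 2000000 in
theorem linearized_gauss_bijective (A : Matrix (Fin 3) (Fin 3) ℝ) (hA : A.IsSymm)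
    (hdet : A.det ≠ 0)
    (T : Fin 3 → Fin 3 → Fin 3 → Fin 3 → ℝ)
    (hT1 : ∀ i j k l, T i j k l = -T j i k l)
    (hT2 : ∀ i j k l, T i j k l = -T i j l k)
    (hT3 : ∀ i j k l, T i j k l = T k l i j) :
    ∃! G : Matrix (Fin 3) (Fin 3) ℝ, G.IsSymm ∧
      ∀ i j k l, G i k * A j l + A i k * G j l - G i l * A j k - A i l * G j k
        = T i j k l := by
  have hfin : ∀ m : Fin 3, m = 0 ∨ m = 1 ∨ m = 2 := by decide
  have ha10 : A 1 0 = A 0 1 := hA.apply 0 1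
  have ha20 : A 2 0 = A 0 2 := hA.apply 0 2
  have ha21 : A 2 1 = A 1 2 := hA.apply 1 2
  have hD : (-1*(A 0 2)*(A 0 2)*(A 1 1) + 2*(A 0 1)*(A 0 2)*(A 1 2) - 1*(A 0 1)*(A 0 1)*(A 2 2) - 1*(A 0 0)*(A 1 2)*(A 1 2) + (A 0 0)*(A 1 1)*(A 2 2)) ≠ 0 := by
    intro h; apply hdet
    rw [Matrix.det_fin_three, ha10, ha20, ha21]; linear_combination h
  obtain ⟨E, hE1⟩ : ∃ E : ℝ, E * (2 * (-1*(A 0 2)*(A 0 2)*(A 1 1) + 2*(A 0 1)*(A 0 2)*(A 1 2) - 1*(A 0 1)*(A 0 1)*(A 2 2) - 1*(A 0 0)*(A 1 2)*(A 1 2) + (A 0 0)*(A 1 1)*(A 2 2))) = 1 :=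
    ⟨_, inv_mul_cancel₀ (mul_ne_zero two_ne_zero hD)⟩
  refine ⟨!![((-2*(A 0 2)*(A 0 2)*(T 0 1 0 1) + 4*(A 0 1)*(A 0 2)*(T 0 1 0 2) - 2*(A 0 1)*(A 0 1)*(T 0 2 0 2) + (A 0 0)*(A 2 2)*(T 0 1 0 1) - 2*(A 0 0)*(A 1 2)*(T 0 1 0 2) + (A 0 0)*(A 1 1)*(T 0 2 0 2) - 2*(A 0 0)*(A 0 2)*(T 0 1 1 2) + 2*(A 0 0)*(A 0 1)*(T 0 2 1 2) - 1*(A 0 0)*(A 0 0)*(T 1 2 1 2)) * E), ((-2*(A 0 2)*(A 1 2)*(T 0 1 0 1) + 2*(A 0 2)*(A 1 1)*(T 0 1 0 2) + (A 0 1)*(A 2 2)*(T 0 1 0 1) - 1*(A 0 1)*(A 1 1)*(T 0 2 0 2) - 2*(A 0 0)*(A 1 2)*(T 0 1 1 2) + 2*(A 0 0)*(A 1 1)*(T 0 2 1 2) - 1*(A 0 0)*(A 0 1)*(T 1 2 1 2)) * E), ((-1*(A 0 2)*(A 2 2)*(T 0 1 0 1) + (A 0 2)*(A 1 1)*(T 0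 2 0 2) + 2*(A 0 1)*(A 2 2)*(T 0 1 0 2) - 2*(A 0 1)*(A 1 2)*(T 0 2 0 2) - 2*(A 0 0)*(A 2 2)*(T 0 1 1 2) + 2*(A 0 0)*(A 1 2)*(T 0 2 1 2) - 1*(A 0 0)*(A 0 2)*(T 1 2 1 2)) * E);
    ((-2*(A 0 2)*(A 1 2)*(T 0 1 0 1) + 2*(A 0 2)*(A 1 1)*(T 0 1 0 2) + (A 0 1)*(A 2 2)*(T 0 1 0 1) - 1*(A 0 1)*(A 1 1)*(T 0 2 0 2) - 2*(A 0 0)*(A 1 2)*(T 0 1 1 2) + 2*(A 0 0)*(A 1 1)*(T 0 2 1 2) - 1*(A 0 0)*(A 0 1)*(T 1 2 1 2)) * E), ((-2*(A 1 2)*(A 1 2)*(T 0 1 0 1) + (A 1 1)*(A 2 2)*(T 0 1 0 1) + 2*(A 1 1)*(A 1 2)*(T 0 1 0 2) - 1*(A 1 1)*(A 1 1)*(T 0 2 0 2) + 2*(A 0 2)*(A 1 1)*(T 0 1 1 2) - 4*(A 0 1)*(A 1 2)*(T 0 1 1 2) + 2*(A 0 1)*(A 1 1)*(T 0 2 1 2)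 - 2*(A 0 1)*(A 0 1)*(T 1 2 1 2) + (A 0 0)*(A 1 1)*(T 1 2 1 2)) * E), ((-1*(A 1 2)*(A 2 2)*(T 0 1 0 1) + 2*(A 1 1)*(A 2 2)*(T 0 1 0 2) - 1*(A 1 1)*(A 1 2)*(T 0 2 0 2) + 2*(A 0 2)*(A 1 1)*(T 0 2 1 2) - 2*(A 0 1)*(A 2 2)*(T 0 1 1 2) - 2*(A 0 1)*(A 0 2)*(T 1 2 1 2) + (A 0 0)*(A 1 2)*(T 1 2 1 2)) * E);
    ((-1*(A 0 2)*(A 2 2)*(T 0 1 0 1) + (A 0 2)*(A 1 1)*(T 0 2 0 2) + 2*(A 0 1)*(A 2 2)*(T 0 1 0 2) - 2*(A 0 1)*(A 1 2)*(T 0 2 0 2) - 2*(A 0 0)*(A 2 2)*(T 0 1 1 2) + 2*(A 0 0)*(A 1 2)*(T 0 2 1 2) - 1*(A 0 0)*(A 0 2)*(T 1 2 1 2)) * E), ((-1*(A 1 2)*(A 2 2)*(T 0 1 0 1) + 2*(A 1 1)*(A 2 2)*(T 0 1 0 2) - 1*(A 1 1)*(A 1 2)*(T 0 2 0 2) + 2*(A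 0 2)*(A 1 1)*(T 0 2 1 2) - 2*(A 0 1)*(A 2 2)*(T 0 1 1 2) - 2*(A 0 1)*(A 0 2)*(T 1 2 1 2) + (A 0 0)*(A 1 2)*(T 1 2 1 2)) * E), ((-1*(A 2 2)*(A 2 2)*(T 0 1 0 1) + 2*(A 1 2)*(A 2 2)*(T 0 1 0 2) - 2*(A 1 2)*(A 1 2)*(T 0 2 0 2) + (A 1 1)*(A 2 2)*(T 0 2 0 2) - 2*(A 0 2)*(A 2 2)*(T 0 1 1 2) + 4*(A 0 2)*(A 1 2)*(T 0 2 1 2) - 2*(A 0 2)*(A 0 2)*(T 1 2 1 2) - 2*(A 0 1)*(A 2 2)*(T 0 2 1 2) + (A 0 0)*(A 2 2)*(T 1 2 1 2)) * E)], ⟨?_, ?_⟩, ?_⟩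
  · ext i j; fin_cases i <;> fin_cases j <;> rfl
  · intro i j k l
    rcases hfin i with rfl|rfl|rfl <;> rcases hfin j with rfl|rfl|rfl <;>
      rcases hfin k with rfl|rfl|rfl <;> rcases hfin l with rfl|rfl|rfl <;>
      simp only [Matrix.cons_val', Matrix.cons_val_zero, Matrix.cons_val_one,
        Matrix.head_cons, Matrix.empty_val', Matrix.cons_val_fin_one,
        Matrix.head_fin_const, Matrix.of_apply, Matrix.cons_val_two, Matrix.tail_cons,
        ha10, ha20, ha21]
    · rw [show T 0 0 0 0 = 0 from by linarith [hT1 0 0 0 0]]; ring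
    · rw [show T 0 0 0 1 = 0 from by linarith [hT1 0 0 0 1]]; ring
    · rw [show T 0 0 0 2 = 0 from by linarith [hT1 0 0 0 2]]; ring
    · rw [show T 0 0 1 0 = 0 from by linarith [hT1 0 0 1 0]]; ring
    · rw [show T 0 0 1 1 = 0 from by linarith [hT1 0 0 1 1]]; ring
    · rw [show T 0 0 1 2 = 0 from by linarith [hT1 0 0 1 2]]; ring
    · rw [show T 0 0 2 0 = 0 from by linarith [hT1 0 0 2 0]]; ring
    · rw [show T 0 0 2 1 = 0 from by linarith [hT1 0 0 2 1]]; ring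
    · rw [show T 0 0 2 2 = 0 from by linarith [hT1 0 0 2 2]]; ring
    · rw [show T 0 1 0 0 = 0 from by linarith [hT2 0 1 0 0]]; ring
    · linear_combination (T 0 1 0 1) * hE1
    · linear_combination (T 0 1 0 2) * hE1
    · rw [show T 0 1 1 0 = -T 0 1 0 1 from by linarith [hT2 0 1 0 1]]
      linear_combination (-T 0 1 0 1) * hE1
    · rw [show T 0 1 1 1 = 0 from by linarith [hT2 0 1 1 1]]; ring
    · linear_combination (T 0 1 1 2) * hE1
    · rw [show T 0 1 2 0 = -T 0 1 0 2 from by linarith [hT2 0 1 0 2]]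
      linear_combination (-T 0 1 0 2) * hE1
    · rw [show T 0 1 2 1 = -T 0 1 1 2 from by linarith [hT2 0 1 1 2]]
      linear_combination (-T 0 1 1 2) * hE1
    · rw [show T 0 1 2 2 = 0 from by linarith [hT2 0 1 2 2]]; ring
    · rw [show T 0 2 0 0 = 0 from by linarith [hT2 0 2 0 0]]; ring
    · rw [show T 0 2 0 1 = T 0 1 0 2 from by linarith [hT3 0 1 0 2]]
      linear_combination (T 0 1 0 2) * hE1
    · linear_combination (T 0 2 0 2) * hE1
    · rw [show T 0 2 1 0 = -T 0 1 0 2 from by linarith [hT2 0 2 0 1, hT3 0 1 0 2]]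
      linear_combination (-T 0 1 0 2) * hE1
    · rw [show T 0 2 1 1 = 0 from by linarith [hT2 0 2 1 1]]; ring
    · linear_combination (T 0 2 1 2) * hE1
    · rw [show T 0 2 2 0 = -T 0 2 0 2 from by linarith [hT2 0 2 0 2]]
      linear_combination (-T 0 2 0 2) * hE1
    · rw [show T 0 2 2 1 = -T 0 2 1 2 from by linarith [hT2 0 2 1 2]]
      linear_combination (-T 0 2 1 2) * hE1
    · rw [show T 0 2 2 2 = 0 from by linarith [hT2 0 2 2 2]]; ring
    · rw [show T 1 0 0 0 = 0 from by linarith [hT2 1 0 0 0]]; ring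
    · rw [show T 1 0 0 1 = -T 0 1 0 1 from by linarith [hT1 0 1 0 1]]
      linear_combination (-T 0 1 0 1) * hE1
    · rw [show T 1 0 0 2 = -T 0 1 0 2 from by linarith [hT1 0 1 0 2]]
      linear_combination (-T 0 1 0 2) * hE1
    · rw [show T 1 0 1 0 = T 0 1 0 1 from by linarith [hT1 0 1 1 0, hT2 0 1 0 1]]
      linear_combination (T 0 1 0 1) * hE1
    · rw [show T 1 0 1 1 = 0 from by linarith [hT2 1 0 1 1]]; ring
    · rw [show T 1 0 1 2 = -T 0 1 1 2 from by linarith [hT1 0 1 1 2]]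
      linear_combination (-T 0 1 1 2) * hE1
    · rw [show T 1 0 2 0 = T 0 1 0 2 from by linarith [hT1 0 1 2 0, hT2 0 1 0 2]]
      linear_combination (T 0 1 0 2) * hE1
    · rw [show T 1 0 2 1 = T 0 1 1 2 from by linarith [hT1 0 1 2 1, hT2 0 1 1 2]]
      linear_combination (T 0 1 1 2) * hE1
    · rw [show T 1 0 2 2 = 0 from by linarith [hT2 1 0 2 2]]; ring
    · rw [show T 1 1 0 0 = 0 from by linarith [hT1 1 1 0 0]]; ring
    · rw [show T 1 1 0 1 = 0 from by linarith [hT1 1 1 0 1]]; ring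
    · rw [show T 1 1 0 2 = 0 from by linarith [hT1 1 1 0 2]]; ring
    · rw [show T 1 1 1 0 = 0 from by linarith [hT1 1 1 1 0]]; ring
    · rw [show T 1 1 1 1 = 0 from by linarith [hT1 1 1 1 1]]; ring
    · rw [show T 1 1 1 2 = 0 from by linarith [hT1 1 1 1 2]]; ring
    · rw [show T 1 1 2 0 = 0 from by linarith [hT1 1 1 2 0]]; ring
    · rw [show T 1 1 2 1 = 0 from by linarith [hT1 1 1 2 1]]; ring
    · rw [show T 1 1 2 2 = 0 from by linarith [hT1 1 1 2 2]]; ring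
    · rw [show T 1 2 0 0 = 0 from by linarith [hT2 1 2 0 0]]; ring
    · rw [show T 1 2 0 1 = T 0 1 1 2 from by linarith [hT3 0 1 1 2]]
      linear_combination (T 0 1 1 2) * hE1
    · rw [show T 1 2 0 2 = T 0 2 1 2 from by linarith [hT3 0 2 1 2]]
      linear_combination (T 0 2 1 2) * hE1
    · rw [show T 1 2 1 0 = -T 0 1 1 2 from by linarith [hT2 1 2 0 1, hT3 0 1 1 2]]
      linear_combination (-T 0 1 1 2) * hE1
    · rw [show T 1 2 1 1 = 0 from by linarith [hT2 1 2 1 1]]; ring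
    · linear_combination (T 1 2 1 2) * hE1
    · rw [show T 1 2 2 0 = -T 0 2 1 2 from by linarith [hT2 1 2 0 2, hT3 0 2 1 2]]
      linear_combination (-T 0 2 1 2) * hE1
    · rw [show T 1 2 2 1 = -T 1 2 1 2 from by linarith [hT2 1 2 1 2]]
      linear_combination (-T 1 2 1 2) * hE1
    · rw [show T 1 2 2 2 = 0 from by linarith [hT2 1 2 2 2]]; ring
    · rw [show T 2 0 0 0 = 0 from by linarith [hT2 2 0 0 0]]; ring
    · rw [show T 2 0 0 1 = -T 0 1 0 2 from by linarith [hT1 0 2 0 1, hT3 0 1 0 2]]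
      linear_combination (-T 0 1 0 2) * hE1
    · rw [show T 2 0 0 2 = -T 0 2 0 2 from by linarith [hT1 0 2 0 2]]
      linear_combination (-T 0 2 0 2) * hE1
    · rw [show T 2 0 1 0 = T 0 1 0 2 from by linarith [hT1 0 2 1 0, hT2 0 2 0 1, hT3 0 1 0 2]]
      linear_combination (T 0 1 0 2) * hE1
    · rw [show T 2 0 1 1 = 0 from by linarith [hT2 2 0 1 1]]; ring
    · rw [show T 2 0 1 2 = -T 0 2 1 2 from by linarith [hT1 0 2 1 2]]
      linear_combination (-T 0 2 1 2) * hE1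
    · rw [show T 2 0 2 0 = T 0 2 0 2 from by linarith [hT1 0 2 2 0, hT2 0 2 0 2]]
      linear_combination (T 0 2 0 2) * hE1
    · rw [show T 2 0 2 1 = T 0 2 1 2 from by linarith [hT1 0 2 2 1, hT2 0 2 1 2]]
      linear_combination (T 0 2 1 2) * hE1
    · rw [show T 2 0 2 2 = 0 from by linarith [hT2 2 0 2 2]]; ring
    · rw [show T 2 1 0 0 = 0 from by linarith [hT2 2 1 0 0]]; ring
    · rw [show T 2 1 0 1 = -T 0 1 1 2 from by linarith [hT1 1 2 0 1, hT3 0 1 1 2]]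
      linear_combination (-T 0 1 1 2) * hE1
    · rw [show T 2 1 0 2 = -T 0 2 1 2 from by linarith [hT1 1 2 0 2, hT3 0 2 1 2]]
      linear_combination (-T 0 2 1 2) * hE1
    · rw [show T 2 1 1 0 = T 0 1 1 2 from by linarith [hT1 1 2 1 0, hT2 1 2 0 1, hT3 0 1 1 2]]
      linear_combination (T 0 1 1 2) * hE1
    · rw [show T 2 1 1 1 = 0 from by linarith [hT2 2 1 1 1]]; ring
    · rw [show T 2 1 1 2 = -T 1 2 1 2 from by linarith [hT1 1 2 1 2]]
      linear_combination (-T 1 2 1 2) * hE1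
    · rw [show T 2 1 2 0 = T 0 2 1 2 from by linarith [hT1 1 2 2 0, hT2 1 2 0 2, hT3 0 2 1 2]]
      linear_combination (T 0 2 1 2) * hE1
    · rw [show T 2 1 2 1 = T 1 2 1 2 from by linarith [hT1 1 2 2 1, hT2 1 2 1 2]]
      linear_combination (T 1 2 1 2) * hE1
    · rw [show T 2 1 2 2 = 0 from by linarith [hT2 2 1 2 2]]; ring
    · rw [show T 2 2 0 0 = 0 from by linarith [hT1 2 2 0 0]]; ring
    · rw [show T 2 2 0 1 = 0 from by linarith [hT1 2 2 0 1]]; ring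
    · rw [show T 2 2 0 2 = 0 from by linarith [hT1 2 2 0 2]]; ring
    · rw [show T 2 2 1 0 = 0 from by linarith [hT1 2 2 1 0]]; ring
    · rw [show T 2 2 1 1 = 0 from by linarith [hT1 2 2 1 1]]; ring
    · rw [show T 2 2 1 2 = 0 from by linarith [hT1 2 2 1 2]]; ring
    · rw [show T 2 2 2 0 = 0 from by linarith [hT1 2 2 2 0]]; ring
    · rw [show T 2 2 2 1 = 0 from by linarith [hT1 2 2 2 1]]; ring
    · rw [show T 2 2 2 2 = 0 from by linarith [hT1 2 2 2 2]]; ring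
  · rintro G' ⟨hs', hKN⟩
    have hg10 : G' 1 0 = G' 0 1 := hs'.apply 0 1
    have hg20 : G' 2 0 = G' 0 2 := hs'.apply 0 2
    have hg21 : G' 2 1 = G' 1 2 := hs'.apply 1 2
    ext i j
    rcases hfin i with rfl|rfl|rfl <;> rcases hfin j with rfl|rfl|rfl <;>
      simp only [Matrix.cons_val', Matrix.cons_val_zero, Matrix.cons_val_one,
        Matrix.head_cons, Matrix.empty_val', Matrix.cons_val_fin_one,
        Matrix.head_fin_const, Matrix.of_apply, Matrix.cons_val_two, Matrix.tail_cons,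
        ha10, ha20, ha21] <;>
      rw [← hKN 0 1 0 1, ← hKN 0 1 0 2, ← hKN 0 1 1 2, ← hKN 0 2 0 2,
        ← hKN 0 2 1 2, ← hKN 1 2 1 2] <;>
      rw [hg10, hg20, hg21, ha10, ha20, ha21]
    · linear_combination (-(G' 0 0)) * hE1
    · linear_combination (-(G' 0 1)) * hE1
    · linear_combination (-(G' 0 2)) * hE1
    · linear_combination (-(G' 0 1)) * hE1
    · linear_combination (-(G' 1 1)) * hE1
    · linear_combination (-(G' 1 2)) * hE1
    · linear_combination (-(G' 0 2)) * hE1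
    · linear_combination (-(G' 1 2)) * hE1
    · linear_combination (-(G' 2 2)) * hE1
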